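/- arXiv:2102.00372 — 2 statements merged into one kernel-verified Lean document; each statement's English description precedes it below -/
import Mathlib

section
/- Let O be the split octonion algebra over a field F (Zorn vector matrices) and O₀ its subspace of trace-zero elements. If V ⊆ O₀ is an F-linear subspace such that x·y = 0 for all x, y ∈ V, then dim_F V ≤ 2. -/
noncomputable section

/-- Dot product on `F³`. -/
def dot3 {F : Type} [Field F] (v w : Fin 3 → F) : F :=
  v 0 * w 0 + v 1 * w 1 + v 2 * w 2

/-- Cross product on `F³`. -/
def cross3 {F : Type} [Field F] (v w : Fin 3 → F) : Fin 3 → F :=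
  ![v 1 * w 2 - v 2 * w 1, v 2 * w 0 - v 0 * w 2, v 0 * w 1 - v 1 * w 0]

/-- Zorn vector matrices `(a, v; w, b)` over `F`: the split octonion algebra. -/
abbrev Zorn (F : Type) : Type := F × (Fin 3 → F) × (Fin 3 → F) × F

/-- Multiplication of Zorn vector matrices:
`(a, v; w, b)·(a', v'; w', b') =
 (aa' + v·w', av' + b'v − w×w'; a'w + bw' + v×v', bb' + w·v')`. -/
def zmul {F : Type} [Field F] (x y : Zorn F) : Zorn F :=
  (x.1 * y.1 + dot3 x.2.1 y.2.2.1,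
   (fun i => x.1 * y.2.1 i + y.2.2.2 * x.2.1 i - cross3 x.2.2.1 y.2.2.1 i),
   (fun i => y.1 * x.2.2.1 i + x.2.2.2 * y.2.2.1 i + cross3 x.2.1 y.2.1 i),
   x.2.2.2 * y.2.2.2 + dot3 x.2.2.1 y.2.1)

/-- Trace of a Zorn matrix: `Tr(a, v; w, b) = a + b`. -/
def ztrace {F : Type} [Field F] (x : Zorn F) : F := x.1 + x.2.2.2

lemma parallel_of_cross_eq_zero {F : Type} [Field F] {u u' : Fin 3 → F}
    (h : cross3 u u' = 0) (hu : u ≠ 0) : ∃ c : F, u' = c • u := by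
  have h0 := congrFun h 0
  have h1 := congrFun h 1
  have h2 := congrFun h 2
  simp [cross3, sub_eq_zero] at h0 h1 h2
  have key : ∀ i j : Fin 3, u' j * u i = u' i * u j := by
    intro i j
    fin_cases i <;> fin_cases j <;>
      simp only [Fin.zero_eta, Fin.mk_one, Fin.reduceFinMk] <;>
      first | linear_combination h0 | linear_combination -h0 | linear_combination h1 | linear_combination -h1 | linear_combination h2 | linear_combination -h2
  have : ∃ i, u i ≠ 0 := by
    by_contra hc
    push_neg at hc
    exact hu (funext hc)
  obtain ⟨i, hi⟩ := this
  refine ⟨u' i * (u i)⁻¹, ?_⟩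
  funext j
  have hk := key i j
  simp only [Pi.smul_apply, smul_eq_mul]
  field_simp
  linear_combination hk

lemma finrank_le_one_of_cross_zero {F : Type} [Field F] (W : Submodule F (Fin 3 → F))
    (h : ∀ u ∈ W, ∀ u' ∈ W, cross3 u u' = 0) : Module.finrank F W ≤ 1 := by
  by_cases hW : W = ⊥
  · rw [hW, finrank_bot]
    omega
  · obtain ⟨u, huW, hu⟩ := Submodule.exists_mem_ne_zero_of_ne_bot hW
    have hle : W ≤ Submodule.span F {u} := by
      intro u' hu'
      obtain ⟨c, hc⟩ := parallel_of_cross_eq_zero (h u huW u' hu') hu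
      rw [hc]
      exact Submodule.smul_mem _ c (Submodule.mem_span_singleton_self u)
    calc Module.finrank F W ≤ Module.finrank F (Submodule.span F {u}) :=
          Submodule.finrank_mono hle
      _ = 1 := finrank_span_singleton hu

set_option maxHeartbeats 1000000 in
set_option synthInstance.maxHeartbeats 400000 in
/-- if `V` is an `F`-linear subspace of the trace-zero split octonions `O₀`
on which octonion multiplication is identically zero, then `dim_F V ≤ 2`. -/
theorem zorn_null_subspace_dim_le_two {F : Type} [Field F] (V : Submodule F (Zorn F))
    (htr : ∀ x ∈ V, ztrace x = 0)
    (hnull : ∀ x ∈ V, ∀ y ∈ V, zmul x y = 0) :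
    Module.finrank F V ≤ 2 := by
  classical
  let A : V →ₗ[F] F :=
    { toFun := fun x => (x : Zorn F).1, map_add' := fun _ _ => rfl,
      map_smul' := fun _ _ => rfl }
  let Pv : V →ₗ[F] (Fin 3 → F) :=
    { toFun := fun x => (x : Zorn F).2.1, map_add' := fun _ _ => rfl,
      map_smul' := fun _ _ => rfl }
  let Pw : V →ₗ[F] (Fin 3 → F) :=
    { toFun := fun x => (x : Zorn F).2.2.1, map_add' := fun _ _ => rfl,
      map_smul' := fun _ _ => rfl }
  have hb : ∀ x : V, (x : Zorn F).2.2.2 = -(x : Zorn F).1 := by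
    intro x
    have h := htr x x.2
    unfold ztrace at h
    linear_combination h
  -- second component of the product
  have hcomp2 : ∀ x y : V, ∀ i,
      (x : Zorn F).1 * (y : Zorn F).2.1 i + (y : Zorn F).2.2.2 * (x : Zorn F).2.1 i
        - cross3 (x : Zorn F).2.2.1 (y : Zorn F).2.2.1 i = 0 := by
    intro x y i
    have h := hnull x x.2 y y.2
    exact congrFun (congrArg (fun z : Zorn F => z.2.1) h) i
  -- third component of the product
  have hcomp3 : ∀ x y : V, ∀ i,
      (y : Zorn F).1 * (x : Zorn F).2.2.1 i + (x : Zorn F).2.2.2 * (y : Zorn F).2.2.1 i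
        + cross3 (x : Zorn F).2.1 (y : Zorn F).2.1 i = 0 := by
    intro x y i
    have h := hnull x x.2 y y.2
    exact congrFun (congrArg (fun z : Zorn F => z.2.2.1) h) i
  -- cross products of w-components vanish when scalar parts vanish
  have hcross_w : ∀ x y : V, (x : Zorn F).1 = 0 → (y : Zorn F).1 = 0 →
      cross3 (x : Zorn F).2.2.1 (y : Zorn F).2.2.1 = 0 := by
    intro x y hx hy
    funext i
    have h := hcomp2 x y i
    have hby := hb y
    rw [hx, hby, hy] at h
    simpa using h
  by_cases hA : ∀ x : V, (x : Zorn F).1 = 0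
  · -- Case 1: all scalar parts vanish
    have hcross_v : ∀ x y : V, cross3 (x : Zorn F).2.1 (y : Zorn F).2.1 = 0 := by
      intro x y
      funext i
      have h := hcomp3 x y i
      have hbx := hb x
      rw [hA y, hbx, hA x] at h
      simpa using h
    have hrange_w : Module.finrank F (LinearMap.range Pw) ≤ 1 := by
      apply finrank_le_one_of_cross_zero
      rintro u ⟨x, rfl⟩ u' ⟨y, rfl⟩
      exact hcross_w x y (hA x) (hA y)
    have hrange_v : Module.finrank F (LinearMap.range Pv) ≤ 1 := by
      apply finrank_le_one_of_cross_zero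
      rintro u ⟨x, rfl⟩ u' ⟨y, rfl⟩
      exact hcross_v x y
    have hker : Module.finrank F (LinearMap.ker Pv) ≤ 1 := by
      set Q : LinearMap.ker Pv →ₗ[F] (Fin 3 → F) := Pw.comp (LinearMap.ker Pv).subtype with hQ
      have hinj : Function.Injective Q := by
        intro z z' hzz
        have hvz : ((z : V) : Zorn F).2.1 = 0 := by
          have h := z.2; rwa [LinearMap.mem_ker] at h
        have hvz' : ((z' : V) : Zorn F).2.1 = 0 := by
          have h := z'.2; rwa [LinearMap.mem_ker] at h
        have hwzz : ((z : V) : Zorn F).2.2.1 = ((z' : V) : Zorn F).2.2.1 := hzz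
        have hmain : ((z : V) : Zorn F) = ((z' : V) : Zorn F) := by
          ext
          · rw [hA (z : V), hA (z' : V)]
          · exact congrFun (hvz.trans hvz'.symm) _
          · exact congrFun hwzz _
          · rw [hb (z : V), hb (z' : V), hA (z : V), hA (z' : V)]
        exact Subtype.ext (Subtype.ext hmain)
      have heq : Module.finrank F (LinearMap.ker Pv) = Module.finrank F (LinearMap.range Q) :=
        (LinearMap.finrank_range_of_inj hinj).symm
      have hle : LinearMap.range Q ≤ LinearMap.range Pw := by
        rw [hQ]
        exact LinearMap.range_comp_le_range _ _
      calc Module.finrank F (LinearMap.ker Pv) = Module.finrank F (LinearMap.range Q) := heq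
        _ ≤ Module.finrank F (LinearMap.range Pw) := Submodule.finrank_mono hle
        _ ≤ 1 := hrange_w
    have := LinearMap.finrank_range_add_finrank_ker Pv
    omega
  · -- Case 2: some element has nonzero scalar part
    push_neg at hA
    obtain ⟨x₀, hx₀⟩ := hA
    have hrange_a : Module.finrank F (LinearMap.range A) ≤ 1 := by
      have h := Submodule.finrank_le (LinearMap.range A)
      simpa using h
    have hker : Module.finrank F (LinearMap.ker A) ≤ 1 := by
      set x₁ : V := ((x₀ : Zorn F).1)⁻¹ • x₀ with hx₁def
      have hx₁a : ((x₁ : V) : Zorn F).1 = 1 := by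
        rw [hx₁def]
        have h : ((((x₀ : Zorn F).1)⁻¹ • x₀ : V) : Zorn F) = ((x₀ : Zorn F).1)⁻¹ • (x₀ : Zorn F) := rfl
        rw [h]
        exact inv_mul_cancel₀ hx₀
      set Q : LinearMap.ker A →ₗ[F] (Fin 3 → F) := Pw.comp (LinearMap.ker A).subtype with hQ
      have hmemA : ∀ z : LinearMap.ker A, ((z : V) : Zorn F).1 = 0 := by
        intro z
        have h := z.2
        rwa [LinearMap.mem_ker] at h
      -- the v-part of a kernel element is determined by its w-part
      have hvform : ∀ z : LinearMap.ker A, ∀ i,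
          ((z : V) : Zorn F).2.1 i
            = cross3 ((x₁ : V) : Zorn F).2.2.1 ((z : V) : Zorn F).2.2.1 i := by
        intro z i
        have h := hcomp2 x₁ (z : V) i
        rw [hx₁a, hb (z : V), hmemA z] at h
        linear_combination h
      have hinj : Function.Injective Q := by
        intro z z' hzz
        have hwzz : ((z : V) : Zorn F).2.2.1 = ((z' : V) : Zorn F).2.2.1 := hzz
        have hmain : ((z : V) : Zorn F) = ((z' : V) : Zorn F) := by
          ext
          · rw [hmemA z, hmemA z']
          · rw [hvform z _, hvform z' _, hwzz]
          · exact congrFun hwzz _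
          · rw [hb (z : V), hb (z' : V), hmemA z, hmemA z']
        exact Subtype.ext (Subtype.ext hmain)
      have heq : Module.finrank F (LinearMap.ker A) = Module.finrank F (LinearMap.range Q) :=
        (LinearMap.finrank_range_of_inj hinj).symm
      have hrQ : Module.finrank F (LinearMap.range Q) ≤ 1 := by
        apply finrank_le_one_of_cross_zero
        rintro u ⟨z, rfl⟩ u' ⟨z', rfl⟩
        exact hcross_w (z : V) (z' : V) (hmemA z) (hmemA z')
      omega
    have := LinearMap.finrank_range_add_finrank_ker A
    omega
end
end

section
/- Let p be a prime and let H be the Heisenberg group of 3×3 upper unitriangular matrices over 𝔽_p, with center Z (of order p). Let X and Y be maximal abelian subgroups of H, and let ψ_X: X → ℂ^× and ψ_Y: Y → ℂ^× be one-dimensional characters whose restrictions to Z agree and are nontrivial. Then Ind_X^H(ψ_X) and Ind_Y^H(ψ_Y) are isomorphic irreducible representations of H of dimension p. -/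
/-- The Heisenberg group of `3×3` upper unitriangular matrices over `𝔽_p`, with
`(a, b, c)` standing for the matrix `(1, a, c; 0, 1, b; 0, 0, 1)`. -/
def Heis (p : ℕ) : Type := ZMod p × ZMod p × ZMod p

namespace Heis

variable {p : ℕ}

instance : Group (Heis p) where
  mul x y := (x.1 + y.1, x.2.1 + y.2.1, x.2.2 + y.2.2 + x.1 * y.2.1)
  one := ((0 : ZMod p), (0 : ZMod p), (0 : ZMod p))
  inv x := (-x.1, -x.2.1, -x.2.2 + x.1 * x.2.1)
  mul_assoc := by
    rintro ⟨a1, a2, a3⟩ ⟨b1, b2, b3⟩ ⟨c1, c2, c3⟩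
    refine Prod.ext ?_ (Prod.ext ?_ ?_)
    · show a1 + b1 + c1 = a1 + (b1 + c1); ring
    · show a2 + b2 + c2 = a2 + (b2 + c2); ring
    · show a3 + b3 + (a1 * b2) + c3 + (a1 + b1) * c2 =
        a3 + (b3 + c3 + b1 * c2) + a1 * (b2 + c2)
      ring
  one_mul := by
    rintro ⟨a1, a2, a3⟩
    refine Prod.ext ?_ (Prod.ext ?_ ?_)
    · show 0 + a1 = a1; ring
    · show 0 + a2 = a2; ring
    · show 0 + a3 + 0 * a2 = a3; ring
  mul_one := by
    rintro ⟨a1, a2, a3⟩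
    refine Prod.ext ?_ (Prod.ext ?_ ?_)
    · show a1 + 0 = a1; ring
    · show a2 + 0 = a2; ring
    · show a3 + 0 + a1 * 0 = a3; ring
  inv_mul_cancel := by
    rintro ⟨a1, a2, a3⟩
    refine Prod.ext ?_ (Prod.ext ?_ ?_)
    · show -a1 + a1 = 0; ring
    · show -a2 + a2 = 0; ring
    · show -a3 + a1 * a2 + a3 + -a1 * a2 = 0; ring

end Heis

noncomputable section

/-- Two representations are isomorphic if there is an equivariant linear equivalence. -/
def RepIso {k : Type} [CommRing k] {M : Type} [Monoid M]
    {V W : Type} [AddCommGroup V] [Module k V] [AddCommGroup W] [Module k W]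
    (ρ : Representation k M V) (π : Representation k M W) : Prop :=
  ∃ e : V ≃ₗ[k] W, ∀ (m : M) (v : V), e (ρ m v) = π m (e v)

/-- A representation is irreducible if the space is nonzero and the only invariant
subspaces are `⊥` and `⊤`. -/
def IsIrred {k : Type} [CommRing k] {M : Type} [Monoid M]
    {V : Type} [AddCommGroup V] [Module k V] (ρ : Representation k M V) : Prop :=
  Nontrivial V ∧
    ∀ p : Submodule k V, (∀ (m : M) (v : V), v ∈ p → ρ m v ∈ p) → p = ⊥ ∨ p = ⊤

variable {G : Type} [Group G]

/-- The underlying space of the induced representation `Ind_H^G τ`: functions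
`f : G → V` with `f(hg) = τ(h) f(g)`. -/
def IndCar {V : Type} [AddCommGroup V] [Module ℂ V] (H : Subgroup G)
    (τ : Representation ℂ H V) : Submodule ℂ (G → V) where
  carrier := {f | ∀ (h : H) (g : G), f (↑h * g) = τ h (f g)}
  add_mem' := by
    intro a b ha hb h g
    simp only [Pi.add_apply, ha h g, hb h g, map_add]
  zero_mem' := by intro h g; simp
  smul_mem' := by
    intro c f hf h g
    simp only [Pi.smul_apply, hf h g, map_smul]

/-- The induced representation `Ind_H^G τ`, with `G` acting by right translation. -/
def IndRep {V : Type} [AddCommGroup V] [Module ℂ V] (H : Subgroup G)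
    (τ : Representation ℂ H V) : Representation ℂ G (IndCar H τ) where
  toFun x :=
    { toFun := fun f => ⟨fun g => (f : G → V) (g * x), fun h g => by
        show (f : G → V) (↑h * g * x) = τ h ((f : G → V) (g * x))
        rw [mul_assoc]; exact f.2 h (g * x)⟩
      map_add' := fun _ _ => rfl
      map_smul' := fun _ _ => rfl }
  map_one' := by
    apply LinearMap.ext; intro f; apply Subtype.ext; funext g
    simp [mul_one]
  map_mul' := by
    intro x y
    apply LinearMap.ext; intro f; apply Subtype.ext; funext g
    simp [mul_assoc]

/-- The one-dimensional representation attached to a character `χ : M →* ℂˣ`. -/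
def charRep {M : Type} [Monoid M] (χ : M →* ℂˣ) : Representation ℂ M ℂ where
  toFun m := (χ m : ℂ) • LinearMap.id
  map_one' := by simp [Module.End.one_eq_id]
  map_mul' := by
    intro x y
    apply LinearMap.ext; intro v
    simp [Module.End.mul_apply, smul_smul, mul_comm]

variable {p : ℕ}

/-- A subgroup is maximal abelian if it is abelian and not properly contained in any
abelian subgroup. -/
def IsMaximalAbelian {G : Type} [Group G] (X : Subgroup G) : Prop :=
  (∀ a ∈ X, ∀ b ∈ X, a * b = b * a) ∧
    ∀ X' : Subgroup G, (∀ a ∈ X', ∀ b ∈ X', a * b = b * a) → X ≤ X' → X' = X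


namespace HeisAux

variable {p : ℕ}

lemma mul_def (x y : Heis p) :
    x * y = (x.1 + y.1, x.2.1 + y.2.1, x.2.2 + y.2.2 + x.1 * y.2.1) := rfl

lemma one_def : (1 : Heis p) = ((0 : ZMod p), (0 : ZMod p), (0 : ZMod p)) := rfl

lemma inv_def (x : Heis p) : x⁻¹ = (-x.1, -x.2.1, -x.2.2 + x.1 * x.2.1) := rfl

instance : DecidableEq (Heis p) := inferInstanceAs (DecidableEq (ZMod p × ZMod p × ZMod p))

instance [NeZero p] : Fintype (Heis p) := inferInstanceAs (Fintype (ZMod p × ZMod p × ZMod p))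

/-- The central element `(0,0,c)`. -/
def zH (c : ZMod p) : Heis p := ((0 : ZMod p), (0 : ZMod p), c)

@[simp] lemma zH_fst (c : ZMod p) : (zH c).1 = 0 := rfl
@[simp] lemma zH_snd (c : ZMod p) : (zH c).2.1 = 0 := rfl
@[simp] lemma zH_thd (c : ZMod p) : (zH c).2.2 = c := rfl

lemma zH_zero : (zH 0 : Heis p) = 1 := rfl

lemma zH_mul (c c' : ZMod p) : (zH c : Heis p) * zH c' = zH (c + c') := by
  refine Prod.ext ?_ (Prod.ext ?_ ?_)
  · show (0 : ZMod p) + 0 = 0; ring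
  · show (0 : ZMod p) + 0 = 0; ring
  · show c + c' + 0 * 0 = c + c'; ring

lemma zH_comm (c : ZMod p) (g : Heis p) : zH c * g = g * zH c := by
  refine Prod.ext ?_ (Prod.ext ?_ ?_)
  · show (0 : ZMod p) + g.1 = g.1 + 0; ring
  · show (0 : ZMod p) + g.2.1 = g.2.1 + 0; ring
  · show c + g.2.2 + 0 * g.2.1 = g.2.2 + c + g.1 * 0; ring

lemma zH_mem_center (c : ZMod p) : (zH c : Heis p) ∈ Subgroup.center (Heis p) := by
  rw [Subgroup.mem_center_iff]
  intro g
  exact (zH_comm c g).symm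

lemma mem_center_coords {z : Heis p} (hz : z ∈ Subgroup.center (Heis p)) :
    z.1 = 0 ∧ z.2.1 = 0 := by
  rw [Subgroup.mem_center_iff] at hz
  constructor
  · have h := congrArg (fun w : Heis p => w.2.2) (hz ((0 : ZMod p), (1 : ZMod p), (0 : ZMod p)))
    have h' : (0 : ZMod p) + z.2.2 + 0 * z.2.1 = z.2.2 + 0 + z.1 * 1 := h
    linear_combination -h'
  · have h := congrArg (fun w : Heis p => w.2.2) (hz ((1 : ZMod p), (0 : ZMod p), (0 : ZMod p)))
    have h' : (0 : ZMod p) + z.2.2 + 1 * z.2.1 = z.2.2 + 0 + z.1 * 0 := h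
    linear_combination h'

lemma eq_zH_of_mem_center {z : Heis p} (hz : z ∈ Subgroup.center (Heis p)) :
    z = zH z.2.2 := by
  obtain ⟨h1, h2⟩ := mem_center_coords hz
  refine Prod.ext h1 (Prod.ext h2 rfl)

lemma conj_def (s g : Heis p) :
    s * g * s⁻¹ = (g.1, g.2.1, g.2.2 + s.1 * g.2.1 - g.1 * s.2.1) := by
  refine Prod.ext ?_ (Prod.ext ?_ ?_)
  · show s.1 + g.1 + -s.1 = g.1; ring
  · show s.2.1 + g.2.1 + -s.2.1 = g.2.1; ring
  · show s.2.2 + g.2.2 + s.1 * g.2.1 + (-s.2.2 + s.1 * s.2.1) + (s.1 + g.1) * (-s.2.1) =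
      g.2.2 + s.1 * g.2.1 - g.1 * s.2.1
    ring

end HeisAux

namespace HeisAux

variable {p : ℕ}

lemma zH_inv (c : ZMod p) : (zH c : Heis p)⁻¹ = zH (-c) := by
  refine Prod.ext ?_ (Prod.ext ?_ ?_)
  · show -(0 : ZMod p) = 0; ring
  · show -(0 : ZMod p) = 0; ring
  · show -c + 0 * 0 = -c; ring

lemma zswap (x x' : Heis p) (c c' : ZMod p) :
    (x * zH c) * (x' * zH c') = (x * x') * zH (c + c') := by
  rw [mul_assoc, ← mul_assoc (zH c), zH_comm, mul_assoc x', zH_mul, ← mul_assoc]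

/-- A maximal abelian subgroup contains the center. -/
lemma zH_mem_of_max {X : Subgroup (Heis p)} (hX : IsMaximalAbelian X) (c : ZMod p) :
    zH c ∈ X := by
  let XZ : Subgroup (Heis p) :=
    { carrier := {g | ∃ x ∈ X, ∃ c, g = x * zH c}
      mul_mem' := by
        rintro g g' ⟨x, hx, c, rfl⟩ ⟨x', hx', c', rfl⟩
        exact ⟨x * x', mul_mem hx hx', c + c', zswap x x' c c'⟩
      one_mem' := ⟨1, one_mem X, 0, by rw [zH_zero, mul_one]⟩
      inv_mem' := by
        rintro g ⟨x, hx, c, rfl⟩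
        exact ⟨x⁻¹, inv_mem hx, -c, by rw [mul_inv_rev, zH_inv, zH_comm]⟩ }
  have habel : ∀ a ∈ XZ, ∀ b ∈ XZ, a * b = b * a := by
    rintro a ⟨x, hx, c, rfl⟩ b ⟨x', hx', c', rfl⟩
    rw [zswap, zswap, hX.1 x hx x' hx', add_comm]
  have hXZ : XZ = X := hX.2 XZ habel (fun x hx => ⟨x, hx, 0, by rw [zH_zero, mul_one]⟩)
  have : zH c ∈ XZ := ⟨1, one_mem X, c, by rw [one_mul]⟩
  rwa [hXZ] at this

/-- Line data for a subgroup: `X` is the preimage of the line spanned by `(α, β)`,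
and `(w₁, w₂)` is a complementary direction. -/
structure LineData (p : ℕ) (X : Subgroup (Heis p)) where
  α : ZMod p
  β : ZMod p
  w₁ : ZMod p
  w₂ : ZMod p
  hD : α * w₂ - β * w₁ ≠ 0
  hmem : ∀ g : Heis p, g ∈ X ↔ α * g.2.1 = β * g.1

variable [Fact p.Prime]

lemma pow_coords (x : Heis p) (n : ℕ) :
    ∃ c, x ^ n = ((n : ZMod p) * x.1, ((n : ZMod p) * x.2.1, c)) := by
  induction n with
  | zero => exact ⟨0, by rw [pow_zero]; refine Prod.ext ?_ (Prod.ext ?_ ?_) <;> simp [one_def]⟩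
  | succ n ih =>
    obtain ⟨c, hc⟩ := ih
    refine ⟨c + x.2.2 + (n : ZMod p) * x.1 * x.2.1, ?_⟩
    rw [pow_succ, hc]
    refine Prod.ext ?_ (Prod.ext ?_ ?_)
    · show (n : ZMod p) * x.1 + x.1 = (((n + 1 : ℕ) : ZMod p)) * x.1
      push_cast; ring
    · show (n : ZMod p) * x.2.1 + x.2.1 = (((n + 1 : ℕ) : ZMod p)) * x.2.1
      push_cast; ring
    · rfl

lemma natCast_val' (t : ZMod p) : ((t.val : ℕ) : ZMod p) = t := by
  simp [ZMod.natCast_val, ZMod.cast_id]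

/-- Every maximal abelian subgroup of the Heisenberg group is the preimage of a line. -/
lemma lineData_of_max {X : Subgroup (Heis p)} (hX : IsMaximalAbelian X) :
    Nonempty (LineData p X) := by
  haveI : Fact (1 < p) := ⟨(Fact.out : p.Prime).one_lt⟩
  have hz : ∀ c, zH c ∈ X := zH_mem_of_max hX
  by_cases hex : ∃ x ∈ X, ¬(x.1 = 0 ∧ x.2.1 = 0)
  · obtain ⟨x₀, hx₀, hne⟩ := hex
    set α := x₀.1 with hα
    set β := x₀.2.1 with hβ
    have hαβ : ¬(α = 0 ∧ β = 0) := hne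
    have hmem : ∀ g : Heis p, g ∈ X ↔ α * g.2.1 = β * g.1 := by
      intro g
      constructor
      · intro hg
        have hcomm := hX.1 g hg x₀ hx₀
        have h3 := congrArg (fun w : Heis p => w.2.2) hcomm
        have : g.2.2 + x₀.2.2 + g.1 * β = x₀.2.2 + g.2.2 + α * g.2.1 := h3
        linear_combination -this
      · intro hg
        have ht : ∃ t : ZMod p, g.1 = t * α ∧ g.2.1 = t * β := by
          rcases (not_and_or.mp hαβ) with hα0 | hβ0
          · refine ⟨g.1 * α⁻¹, ?_, ?_⟩
            · rw [mul_assoc, inv_mul_cancel₀ hα0, mul_one]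
            · refine mul_left_cancel₀ hα0 ?_
              calc α * g.2.1 = β * g.1 := hg
                _ = (α * α⁻¹) * (g.1 * β) := by rw [mul_inv_cancel₀ hα0]; ring
                _ = α * (g.1 * α⁻¹ * β) := by ring
          · refine ⟨g.2.1 * β⁻¹, ?_, ?_⟩
            · refine mul_left_cancel₀ hβ0 ?_
              calc β * g.1 = α * g.2.1 := hg.symm
                _ = (β * β⁻¹) * (α * g.2.1) := by rw [mul_inv_cancel₀ hβ0]; ring
                _ = β * (g.2.1 * β⁻¹ * α) := by ring
            · rw [mul_assoc, inv_mul_cancel₀ hβ0, mul_one]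
        obtain ⟨t, h1, h2⟩ := ht
        obtain ⟨c, hc⟩ := pow_coords x₀ t.val
        have heq : x₀ ^ t.val * zH (g.2.2 - c) = g := by
          rw [hc]
          refine Prod.ext ?_ (Prod.ext ?_ ?_)
          · show (t.val : ZMod p) * α + 0 = g.1
            rw [natCast_val', add_zero, h1]
          · show (t.val : ZMod p) * β + 0 = g.2.1
            rw [natCast_val', add_zero, h2]
          · show c + (g.2.2 - c) + (t.val : ZMod p) * α * 0 = g.2.2
            ring
        exact heq ▸ mul_mem (pow_mem hx₀ t.val) (hz _)
    rcases not_and_or.mp hαβ with hα0 | hβ0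
    · exact ⟨⟨α, β, 0, 1, by simpa using hα0, hmem⟩⟩
    · exact ⟨⟨α, β, 1, 0, by simpa using hβ0, hmem⟩⟩
  · push_neg at hex
    exfalso
    let X' : Subgroup (Heis p) :=
      { carrier := {g | g.2.1 = 0}
        mul_mem' := by
          intro a b ha hb
          show (a * b).2.1 = 0
          show a.2.1 + b.2.1 = 0
          rw [ha, hb, add_zero]
        one_mem' := rfl
        inv_mem' := by
          intro a ha
          show (a⁻¹).2.1 = 0
          show -a.2.1 = 0
          rw [ha, neg_zero] }
    have habel : ∀ a ∈ X', ∀ b ∈ X', a * b = b * a := by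
      intro a ha b hb
      have ha' : a.2.1 = 0 := ha
      have hb' : b.2.1 = 0 := hb
      refine Prod.ext ?_ (Prod.ext ?_ ?_)
      · show a.1 + b.1 = b.1 + a.1; ring
      · show a.2.1 + b.2.1 = b.2.1 + a.2.1; ring
      · show a.2.2 + b.2.2 + a.1 * b.2.1 = b.2.2 + a.2.2 + b.1 * a.2.1
        rw [ha', hb']; ring
    have hle : X ≤ X' := fun x hx => (hex x hx).2
    have hX' : X' = X := hX.2 X' habel hle
    have h1 : ((1 : ZMod p), (0 : ZMod p), (0 : ZMod p)) ∈ X' := rfl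
    rw [hX'] at h1
    exact one_ne_zero ((hex _ h1).1)

end HeisAux

namespace HeisAux

lemma charRep_apply {M : Type} [Monoid M] (χ : M →* ℂˣ) (m : M) (v : ℂ) :
    charRep χ m v = (χ m : ℂ) * v := rfl

namespace LineData

variable {p : ℕ} [Fact p.Prime] {X : Subgroup (Heis p)} (L : LineData p X)

/-- The determinant pairing the line with the complementary direction. -/
def D : ZMod p := L.α * L.w₂ - L.β * L.w₁

/-- The coset coordinate of `g`. -/
def T (g : Heis p) : ZMod p := (L.α * g.2.1 - L.β * g.1) * L.D⁻¹

/-- The chosen coset representatives. -/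
def r (t : ZMod p) : Heis p := (t * L.w₁, t * L.w₂, 0)

lemma T_mul (g h : Heis p) : L.T (g * h) = L.T g + L.T h := by
  show (L.α * (g.2.1 + h.2.1) - L.β * (g.1 + h.1)) * L.D⁻¹ =
    (L.α * g.2.1 - L.β * g.1) * L.D⁻¹ + (L.α * h.2.1 - L.β * h.1) * L.D⁻¹
  ring

lemma D_ne_zero : L.D ≠ 0 := L.hD

lemma T_r (t : ZMod p) : L.T (L.r t) = t := by
  show (L.α * (t * L.w₂) - L.β * (t * L.w₁)) * L.D⁻¹ = t
  have h : L.α * (t * L.w₂) - L.β * (t * L.w₁) = t * L.D := by unfold D; ring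
  rw [h, mul_assoc, mul_inv_cancel₀ L.D_ne_zero, mul_one]

lemma r_zero : L.r 0 = 1 := by
  refine Prod.ext ?_ (Prod.ext ?_ ?_)
  · show (0 : ZMod p) * L.w₁ = 0; ring
  · show (0 : ZMod p) * L.w₂ = 0; ring
  · rfl

lemma mem_iff_T (g : Heis p) : g ∈ X ↔ L.T g = 0 := by
  rw [L.hmem]
  unfold T
  constructor
  · intro h; rw [h]; ring_nf
  · intro h
    rcases mul_eq_zero.mp h with h' | h'
    · linear_combination h'
    · exact absurd h' (inv_ne_zero L.D_ne_zero)

lemma T_eq_zero_of_mem {g : Heis p} (hg : g ∈ X) : L.T g = 0 := (L.mem_iff_T g).mp hg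

/-- The `X`-part of the decomposition `g = xg g * r (T g)`. -/
def xg (g : Heis p) : Heis p := g * (L.r (L.T g))⁻¹

lemma xg_spec (g : Heis p) : L.xg g * L.r (L.T g) = g := inv_mul_cancel_right g _

lemma xg_mem (g : Heis p) : L.xg g ∈ X := by
  rw [L.hmem]
  show L.α * (g.2.1 + -(L.T g * L.w₂)) = L.β * (g.1 + -(L.T g * L.w₁))
  have key : L.T g * L.D = L.α * g.2.1 - L.β * g.1 := by
    unfold T
    rw [mul_assoc, inv_mul_cancel₀ L.D_ne_zero, mul_one]
  unfold D at key
  linear_combination -key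

lemma xg_of_mul_mem {x : Heis p} (hx : x ∈ X) (g : Heis p) :
    L.xg (x * g) = x * L.xg g := by
  unfold xg
  rw [L.T_mul, L.T_eq_zero_of_mem hx, zero_add, mul_assoc]

lemma r_mul_r (u v : ZMod p) :
    L.r u * L.r v = L.r (u + v) * zH (u * v * L.w₁ * L.w₂) := by
  refine Prod.ext ?_ (Prod.ext ?_ ?_)
  · show u * L.w₁ + v * L.w₁ = (u + v) * L.w₁ + 0; ring
  · show u * L.w₂ + v * L.w₂ = (u + v) * L.w₂ + 0; ring
  · show (0 : ZMod p) + 0 + u * L.w₁ * (v * L.w₂) =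
      0 + u * v * L.w₁ * L.w₂ + (u + v) * L.w₁ * 0
    ring

lemma xg_of_mul_r (g : Heis p) (u : ZMod p) :
    L.xg (g * L.r u) = L.xg g * zH (L.T g * u * L.w₁ * L.w₂) := by
  have h1 : L.r (L.T g) * L.r u = L.r (L.T g + u) * zH (L.T g * u * L.w₁ * L.w₂) :=
    L.r_mul_r (L.T g) u
  have h2 : L.r u * (L.r (L.T g + u))⁻¹ =
      (L.r (L.T g))⁻¹ * zH (L.T g * u * L.w₁ * L.w₂) := by
    calc L.r u * (L.r (L.T g + u))⁻¹
        = (L.r (L.T g))⁻¹ * (L.r (L.T g) * L.r u) * (L.r (L.T g + u))⁻¹ := by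
          rw [inv_mul_cancel_left]
      _ = (L.r (L.T g))⁻¹ * (L.r (L.T g + u) * zH (L.T g * u * L.w₁ * L.w₂)) *
          (L.r (L.T g + u))⁻¹ := by rw [h1]
      _ = (L.r (L.T g))⁻¹ * zH (L.T g * u * L.w₁ * L.w₂) := by
          rw [← zH_comm, ← mul_assoc, mul_assoc _ _ (L.r (L.T g + u))⁻¹,
            mul_inv_cancel, mul_one]
  unfold xg
  rw [L.T_mul, L.T_r, mul_assoc, h2]
  exact (mul_assoc _ _ _).symm

/-- Central elements as elements of `X`. -/
def zHX (c : ZMod p) : X := ⟨zH c, by rw [L.hmem]; show L.α * 0 = L.β * 0; ring⟩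

lemma zHX_mul (c c' : ZMod p) : L.zHX c * L.zHX c' = L.zHX (c + c') :=
  Subtype.ext (zH_mul c c')

lemma zHX_zero : L.zHX 0 = 1 := Subtype.ext zH_zero

/-- The `X`-part as an element of `X`. -/
def xgX (g : Heis p) : X := ⟨L.xg g, L.xg_mem g⟩

lemma xgX_mul_mem (x : X) (g : Heis p) : L.xgX (↑x * g) = x * L.xgX g :=
  Subtype.ext (L.xg_of_mul_mem x.2 g)

lemma xgX_mul_r (g : Heis p) (u : ZMod p) :
    L.xgX (g * L.r u) = L.xgX g * L.zHX (L.T g * u * L.w₁ * L.w₂) :=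
  Subtype.ext (L.xg_of_mul_r g u)

lemma xgX_r (t : ZMod p) : L.xgX (L.r t) = 1 := by
  refine Subtype.ext ?_
  show L.xg (L.r t) = 1
  unfold xg
  rw [L.T_r, mul_inv_cancel]

lemma xgX_of_mem {g : Heis p} (hg : g ∈ X) : L.xgX g = ⟨g, hg⟩ := by
  refine Subtype.ext ?_
  show L.xg g = g
  unfold xg
  rw [L.T_eq_zero_of_mem hg, L.r_zero, inv_one, mul_one]

/-- The central character attached to `ψ`. -/
def om (ψ : X →* ℂˣ) (c : ZMod p) : ℂˣ := ψ (L.zHX c)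

variable (ψ : X →* ℂˣ)

lemma om_add (c c' : ZMod p) : L.om ψ (c + c') = L.om ψ c * L.om ψ c' := by
  unfold om
  rw [← map_mul, L.zHX_mul]

lemma om_zero : L.om ψ 0 = 1 := by
  unfold om
  rw [L.zHX_zero, map_one]

lemma om_natCast (n : ℕ) : L.om ψ (n : ZMod p) = L.om ψ 1 ^ n := by
  induction n with
  | zero => rw [pow_zero, Nat.cast_zero, L.om_zero]
  | succ n ih => rw [Nat.cast_succ, L.om_add, ih, pow_succ]

lemma om_eq_pow (c : ZMod p) : L.om ψ c = L.om ψ 1 ^ c.val := by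
  rw [← L.om_natCast ψ c.val, natCast_val']

lemma om_ne_one (hnt : ∃ c, L.om ψ c ≠ 1) : L.om ψ 1 ≠ 1 := by
  intro h
  obtain ⟨c, hc⟩ := hnt
  exact hc (by rw [L.om_eq_pow, h, one_pow])

lemma om_eq_one_iff (hnt : ∃ c, L.om ψ c ≠ 1) (c : ZMod p) :
    L.om ψ c = 1 ↔ c = 0 := by
  constructor
  · intro h
    have hζ : orderOf (L.om ψ 1) = p := by
      refine orderOf_eq_prime ?_ (L.om_ne_one ψ hnt)
      rw [← L.om_natCast, ZMod.natCast_self, L.om_zero]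
    have hdvd : p ∣ c.val := by
      have := orderOf_dvd_of_pow_eq_one (x := L.om ψ 1) (n := c.val) (by rw [← L.om_eq_pow, h])
      rwa [hζ] at this
    have hv : c.val = 0 := by
      by_contra hv
      exact absurd (Nat.le_of_dvd (Nat.pos_of_ne_zero hv) hdvd) (not_le.mpr (ZMod.val_lt c))
    rw [← natCast_val' c, hv, Nat.cast_zero]
  · rintro rfl; exact L.om_zero ψ

end LineData

end HeisAux

namespace HeisAux

instance heisNeZero {p : ℕ} [hp : Fact p.Prime] : NeZero p := ⟨hp.out.ne_zero⟩

noncomputable instance subgroupFintype {p : ℕ} [NeZero p] (X : Subgroup (Heis p)) :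
    Fintype X := Fintype.ofFinite X

lemma indRep_apply {G : Type} [Group G] {V : Type} [AddCommGroup V] [Module ℂ V]
    (H : Subgroup G) (τ : Representation ℂ H V) (x : G) (f : IndCar H τ) (g : G) :
    ((IndRep H τ x f : IndCar H τ) : G → V) g = (f : G → V) (g * x) := rfl

lemma indCar_sum_apply {G : Type} [Group G] {V : Type} [AddCommGroup V] [Module ℂ V]
    (H : Subgroup G) (τ : Representation ℂ H V) {ι : Type} (s : Finset ι)
    (v : ι → IndCar H τ) (g : G) :
    ((↑(∑ i ∈ s, v i) : G → V)) g = ∑ i ∈ s, (↑(v i) : G → V) g := by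
  have h := congrFun (map_sum ((IndCar H τ).subtype) v s) g
  simpa using h

lemma sum_eq_zero_of_hom {G : Type} [Group G] [Fintype G] (F : G → ℂ)
    (hmul : ∀ g h, F (g * h) = F g * F h) (hnt : ∃ g, F g ≠ 1) :
    ∑ g, F g = 0 := by
  obtain ⟨g₀, h0⟩ := hnt
  have h2 : F g₀ * ∑ g, F g = ∑ g, F g := by
    rw [Finset.mul_sum]
    refine Fintype.sum_equiv (Equiv.mulLeft g₀) _ _ (fun g => ?_)
    simp only [Equiv.coe_mulLeft]
    exact (hmul g₀ g).symm
  have h3 : (F g₀ - 1) * ∑ g, F g = 0 := by rw [sub_mul, one_mul, h2, sub_self]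
  rcases mul_eq_zero.mp h3 with h | h
  · exact absurd (sub_eq_zero.mp h) h0
  · exact h

namespace LineData

variable {p : ℕ} [Fact p.Prime] {X : Subgroup (Heis p)} (L : LineData p X) (ψ : X →* ℂˣ)

lemma om_neg (c : ZMod p) : L.om ψ (-c) = (L.om ψ c)⁻¹ := by
  refine eq_inv_of_mul_eq_one_left ?_
  rw [← L.om_add, neg_add_cancel, L.om_zero]

/-- values of `f ∈ Ind` decompose along the coset decomposition. -/
lemma val_decomp (f : IndCar X (charRep ψ)) (g : Heis p) :
    (f : Heis p → ℂ) g = (ψ (L.xgX g) : ℂ) * (f : Heis p → ℂ) (L.r (L.T g)) := by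
  have h := f.2 (L.xgX g) (L.r (L.T g))
  rw [charRep_apply] at h
  have h2 : ((L.xgX g : Heis p)) * L.r (L.T g) = g := L.xg_spec g
  rw [h2] at h
  exact h

/-- The basis function supported on the coset with coordinate `t`. -/
def bfFun (t : ZMod p) : Heis p → ℂ :=
  fun g => if L.T g = t then (ψ (L.xgX g) : ℂ) else 0

lemma bfFun_mem (t : ZMod p) : L.bfFun ψ t ∈ IndCar X (charRep ψ) := by
  intro h g
  rw [charRep_apply]
  unfold bfFun
  rw [L.T_mul, L.T_eq_zero_of_mem h.2, zero_add, L.xgX_mul_mem]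
  by_cases hT : L.T g = t
  · rw [if_pos hT, if_pos hT, map_mul, Units.val_mul]
  · rw [if_neg hT, if_neg hT, mul_zero]

def bf (t : ZMod p) : IndCar X (charRep ψ) := ⟨L.bfFun ψ t, L.bfFun_mem ψ t⟩

lemma bfFun_r (t s : ZMod p) :
    L.bfFun ψ t (L.r s) = if s = t then 1 else 0 := by
  unfold bfFun
  rw [L.T_r, L.xgX_r, map_one]
  simp

/-- Every element of the induced space is a combination of the basis functions. -/
lemma expansion (f : IndCar X (charRep ψ)) :
    f = ∑ t : ZMod p, ((f : Heis p → ℂ) (L.r t)) • L.bf ψ t := by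
  apply Subtype.ext
  funext g
  rw [indCar_sum_apply]
  have hterm : ∀ t : ZMod p,
      ((↑(((f : Heis p → ℂ) (L.r t)) • L.bf ψ t) : Heis p → ℂ)) g =
        (f : Heis p → ℂ) (L.r t) * L.bfFun ψ t g := fun t => rfl
  rw [Finset.sum_congr rfl (fun t _ => hterm t)]
  unfold bfFun
  rw [Finset.sum_eq_single (L.T g)]
  · rw [if_pos rfl, L.val_decomp ψ f g]; ring
  · intro b _ hb
    rw [if_neg (fun h => hb h.symm), mul_zero]
  · intro h
    exact absurd (Finset.mem_univ _) h

/-- The symplectic pairing coordinate of an element of `X`. -/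
def phi (x : X) : ZMod p := L.w₁ * (x : Heis p).2.1 - (x : Heis p).1 * L.w₂

lemma phi_mul (x y : X) : L.phi (x * y) = L.phi x + L.phi y := by
  unfold phi
  show L.w₁ * ((x : Heis p).2.1 + (y : Heis p).2.1) -
    ((x : Heis p).1 + (y : Heis p).1) * L.w₂ = _
  ring

/-- The distinguished non-central element of `X`. -/
def x₁ : X := ⟨(L.α, L.β, (0 : ZMod p)), by refine (L.hmem _).mpr ?_; show L.α * L.β = L.β * L.α; ring⟩

lemma phi_x₁ : L.phi L.x₁ = -L.D := by
  unfold phi x₁ D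
  show L.w₁ * L.β - L.α * L.w₂ = -(L.α * L.w₂ - L.β * L.w₁)
  ring

lemma conj_r (t : ZMod p) (x : Heis p) :
    L.r t * x * (L.r t)⁻¹ = x * zH (t * (L.w₁ * x.2.1 - x.1 * L.w₂)) := by
  rw [conj_def]
  refine Prod.ext ?_ (Prod.ext ?_ ?_)
  · show x.1 = x.1 + 0; ring
  · show x.2.1 = x.2.1 + 0; ring
  · show x.2.2 + (t * L.w₁) * x.2.1 - x.1 * (t * L.w₂) =
      x.2.2 + t * (L.w₁ * x.2.1 - x.1 * L.w₂) + x.1 * 0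
    ring

lemma xg_mul_coe (g x : Heis p) (hx : x ∈ X) :
    L.xg (g * x) = L.xg g * (x * zH (L.T g * (L.w₁ * x.2.1 - x.1 * L.w₂))) := by
  unfold xg
  rw [L.T_mul, L.T_eq_zero_of_mem hx, add_zero]
  have h := L.conj_r (L.T g) x
  calc g * x * (L.r (L.T g))⁻¹
      = g * (L.r (L.T g))⁻¹ * (L.r (L.T g) * x * (L.r (L.T g))⁻¹) := by group
    _ = g * (L.r (L.T g))⁻¹ * (x * zH (L.T g * (L.w₁ * x.2.1 - x.1 * L.w₂))) := by rw [h]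

lemma xgX_mul_coe (g : Heis p) (x : X) :
    L.xgX (g * ↑x) = L.xgX g * (x * L.zHX (L.T g * L.phi x)) :=
  Subtype.ext (L.xg_mul_coe g ↑x x.2)

lemma om_zhx (c : ZMod p) : ψ (L.zHX c) = L.om ψ c := rfl

/-- value of `ρ(x) f` for `x ∈ X`. -/
lemma val_rho (f : IndCar X (charRep ψ)) (g : Heis p) (x : X) :
    (f : Heis p → ℂ) (g * ↑x) =
      (ψ (L.xgX g) : ℂ) * (ψ x : ℂ) * (L.om ψ (L.T g * L.phi x) : ℂ) *
        (f : Heis p → ℂ) (L.r (L.T g)) := by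
  rw [L.val_decomp ψ f (g * ↑x)]
  have hT : L.T (g * ↑x) = L.T g := by
    rw [L.T_mul, L.T_eq_zero_of_mem x.2, add_zero]
  rw [hT, L.xgX_mul_coe, map_mul, map_mul, L.om_zhx, Units.val_mul, Units.val_mul]
  ring

/-- The averaging projector onto the `t`-th coset line. -/
def Q (t : ZMod p) (f : IndCar X (charRep ψ)) : IndCar X (charRep ψ) :=
  ∑ x : X, (((ψ x * L.om ψ (t * L.phi x) : ℂˣ) : ℂ))⁻¹ • (IndRep X (charRep ψ) ↑x f)

lemma Q_eq (hnt : ∃ c, L.om ψ c ≠ 1) (t : ZMod p) (f : IndCar X (charRep ψ)) :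
    L.Q ψ t f = ((Fintype.card X : ℂ) * (f : Heis p → ℂ) (L.r t)) • L.bf ψ t := by
  apply Subtype.ext
  funext g
  unfold Q
  rw [indCar_sum_apply]
  have hterm : ∀ x : X,
      ((↑((((ψ x * L.om ψ (t * L.phi x) : ℂˣ) : ℂ))⁻¹ • (IndRep X (charRep ψ) ↑x f)) :
        Heis p → ℂ)) g =
      (ψ (L.xgX g) : ℂ) * (f : Heis p → ℂ) (L.r (L.T g)) *
        (L.om ψ ((L.T g - t) * L.phi x) : ℂ) := by
    intro x
    have h1 : ((↑((((ψ x * L.om ψ (t * L.phi x) : ℂˣ) : ℂ))⁻¹ • (IndRep X (charRep ψ) ↑x f)) :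
        Heis p → ℂ)) g = (((ψ x * L.om ψ (t * L.phi x) : ℂˣ) : ℂ))⁻¹ *
          (f : Heis p → ℂ) (g * ↑x) := rfl
    rw [h1, L.val_rho ψ f g x]
    have hrel : (L.om ψ ((L.T g - t) * L.phi x) : ℂ) * (L.om ψ (t * L.phi x) : ℂ) =
        (L.om ψ (L.T g * L.phi x) : ℂ) := by
      rw [← Units.val_mul, ← L.om_add]
      congr 2
      ring
    rw [← hrel, Units.val_mul]
    have ha : ((ψ x : ℂˣ) : ℂ) ≠ 0 := Units.ne_zero _
    have hb : ((L.om ψ (t * L.phi x) : ℂˣ) : ℂ) ≠ 0 := Units.ne_zero _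
    field_simp
  rw [Finset.sum_congr rfl (fun x _ => hterm x), ← Finset.mul_sum]
  by_cases hT : L.T g = t
  · have : ∀ x : X, (L.om ψ ((L.T g - t) * L.phi x) : ℂ) = 1 := by
      intro x
      rw [hT, sub_self, zero_mul, L.om_zero, Units.val_one]
    rw [Finset.sum_congr rfl (fun x _ => this x), Finset.sum_const, Finset.card_univ,
      nsmul_eq_mul, mul_one]
    show _ = (_ * _) * L.bfFun ψ t g
    unfold bfFun
    rw [if_pos hT, hT]
    ring
  · have hzero : ∑ x : X, (L.om ψ ((L.T g - t) * L.phi x) : ℂ) = 0 := by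
      refine sum_eq_zero_of_hom _ (fun x y => ?_) ⟨L.x₁, ?_⟩
      · rw [L.phi_mul, ← Units.val_mul, ← L.om_add]
        congr 2
        ring
      · rw [L.phi_x₁]
        intro hone
        have : L.om ψ ((L.T g - t) * -L.D) = 1 := Units.ext hone
        rw [L.om_eq_one_iff ψ hnt] at this
        rcases mul_eq_zero.mp this with h | h
        · exact hT (sub_eq_zero.mp h)
        · exact L.D_ne_zero (neg_eq_zero.mp h)
    rw [hzero, mul_zero]
    show (0 : ℂ) = (_ * _) * L.bfFun ψ t g
    unfold bfFun
    rw [if_neg hT, mul_zero]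

lemma bf_translate (s u : ZMod p) :
    IndRep X (charRep ψ) (L.r u) (L.bf ψ s) =
      ((L.om ψ ((s - u) * u * L.w₁ * L.w₂) : ℂˣ) : ℂ) • L.bf ψ (s - u) := by
  apply Subtype.ext
  funext g
  rw [indRep_apply]
  show L.bfFun ψ s (g * L.r u) = _ * L.bfFun ψ (s - u) g
  unfold bfFun
  have hT : L.T (g * L.r u) = L.T g + u := by rw [L.T_mul, L.T_r]
  rw [hT, L.xgX_mul_r]
  by_cases hc : L.T g = s - u
  · have hc' : L.T g + u = s := by rw [hc]; ring
    rw [if_pos hc', if_pos hc, map_mul, L.om_zhx, Units.val_mul, hc]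
    ring
  · have hc' : ¬(L.T g + u = s) := fun h => hc (by rw [← h]; ring)
    rw [if_neg hc', if_neg hc, mul_zero]

lemma smul_mem_cancel {V : Type} [AddCommGroup V] [Module ℂ V] {W : Submodule ℂ V}
    {c : ℂ} (hc : c ≠ 0) {v : V} (h : c • v ∈ W) : v ∈ W := by
  have := W.smul_mem c⁻¹ h
  rwa [smul_smul, inv_mul_cancel₀ hc, one_smul] at this

/-- Irreducibility of the induced representation. -/
theorem isIrred_ind (hnt : ∃ c, L.om ψ c ≠ 1) :
    IsIrred (IndRep X (charRep ψ)) := by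
  haveI : Fact (1 < p) := ⟨(Fact.out : p.Prime).one_lt⟩
  constructor
  · refine ⟨L.bf ψ 0, 0, fun h => ?_⟩
    have h1 := congrFun (congrArg (Subtype.val) h) (L.r 0)
    rw [show ((L.bf ψ 0 : IndCar X (charRep ψ)) : Heis p → ℂ) (L.r 0) =
      L.bfFun ψ 0 (L.r 0) from rfl, L.bfFun_r] at h1
    simp at h1
  · intro W hW
    by_cases hbot : W = ⊥
    · exact Or.inl hbot
    right
    obtain ⟨f, hfW, hf0⟩ := Submodule.ne_bot_iff W |>.mp hbot
    have hex : ∃ g₀, (f : Heis p → ℂ) g₀ ≠ 0 := by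
      by_contra hc
      push_neg at hc
      exact hf0 (Subtype.ext (funext hc))
    obtain ⟨g₀, hg₀⟩ := hex
    have hfr : (f : Heis p → ℂ) (L.r (L.T g₀)) ≠ 0 := by
      intro h
      rw [L.val_decomp ψ f g₀, h, mul_zero] at hg₀
      exact hg₀ rfl
    set t₀ := L.T g₀ with ht₀
    have hQW : L.Q ψ t₀ f ∈ W := by
      refine Submodule.sum_mem W (fun x _ => Submodule.smul_mem W _ ?_)
      exact hW (↑x) f hfW
    rw [L.Q_eq ψ hnt] at hQW
    have hcard : ((Fintype.card X : ℂ) * (f : Heis p → ℂ) (L.r t₀)) ≠ 0 := by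
      refine mul_ne_zero ?_ hfr
      exact_mod_cast Nat.cast_ne_zero.mpr Fintype.card_ne_zero
    have hbfW : L.bf ψ t₀ ∈ W := smul_mem_cancel hcard hQW
    have hbfall : ∀ t : ZMod p, L.bf ψ t ∈ W := by
      intro t
      have h1 : IndRep X (charRep ψ) (L.r (t₀ - t)) (L.bf ψ t₀) ∈ W :=
        hW (L.r (t₀ - t)) _ hbfW
      rw [L.bf_translate] at h1
      have h2 : t₀ - (t₀ - t) = t := by ring
      rw [h2] at h1
      exact smul_mem_cancel (Units.ne_zero _) h1
    rw [eq_top_iff]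
    intro f' _
    rw [L.expansion ψ f']
    exact Submodule.sum_mem W (fun t _ => Submodule.smul_mem W _ (hbfall t))

/-- The evaluation equivalence with the space of functions on coset labels. -/
def evalEquiv : IndCar X (charRep ψ) ≃ₗ[ℂ] (ZMod p → ℂ) where
  toFun f := fun t => (f : Heis p → ℂ) (L.r t)
  map_add' f g := rfl
  map_smul' c f := rfl
  invFun φ := ⟨fun g => (ψ (L.xgX g) : ℂ) * φ (L.T g), by
    intro h g
    rw [charRep_apply]
    have hT : L.T (↑h * g) = L.T g := by
      rw [L.T_mul, L.T_eq_zero_of_mem h.2, zero_add]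
    show (ψ (L.xgX (↑h * g)) : ℂ) * φ (L.T (↑h * g)) = _
    rw [hT, L.xgX_mul_mem, map_mul, Units.val_mul]
    ring⟩
  left_inv f := by
    apply Subtype.ext
    funext g
    show (ψ (L.xgX g) : ℂ) * (f : Heis p → ℂ) (L.r (L.T g)) = (f : Heis p → ℂ) g
    exact (L.val_decomp ψ f g).symm
  right_inv φ := by
    funext t
    show (ψ (L.xgX (L.r t)) : ℂ) * φ (L.T (L.r t)) = φ t
    rw [L.T_r, L.xgX_r, map_one, Units.val_one, one_mul]

include L in
theorem finrank_ind : Module.finrank ℂ (IndCar X (charRep ψ)) = p := by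
  rw [LinearEquiv.finrank_eq (evalEquiv L ψ), Module.finrank_fintype_fun_eq_card, ZMod.card]

end LineData

end HeisAux

namespace HeisAux

namespace LineData

variable {p : ℕ} [Fact p.Prime] {X : Subgroup (Heis p)} (L : LineData p X)

lemma ne_both_zero : ¬(L.α = 0 ∧ L.β = 0) := by
  rintro ⟨h1, h2⟩
  exact L.hD (by rw [h1, h2]; ring)

lemma om_natmul (ψ : X →* ℂˣ) (n : ℕ) (c : ZMod p) :
    L.om ψ ((n : ZMod p) * c) = L.om ψ c ^ n := by
  induction n with
  | zero => rw [pow_zero, Nat.cast_zero, zero_mul, L.om_zero]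
  | succ n ih =>
    rw [pow_succ, ← ih, ← L.om_add]
    congr 1
    push_cast
    ring

include L in
lemma conj_mem (s : Heis p) {x : Heis p} (hx : x ∈ X) : s * x * s⁻¹ ∈ X := by
  have h := (L.hmem x).mp hx
  rw [L.hmem, conj_def]
  exact h

/-- The line coordinate of an element of `X`. -/
def tau (x : X) : ZMod p :=
  (L.w₂ * (x : Heis p).1 - L.w₁ * (x : Heis p).2.1) * L.D⁻¹

lemma coords_eq_tau (x : X) :
    L.tau x * L.α = (x : Heis p).1 ∧ L.tau x * L.β = (x : Heis p).2.1 := by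
  have hx := (L.hmem _).mp x.2
  have hD := L.D_ne_zero
  constructor
  · have h : (L.w₂ * (x : Heis p).1 - L.w₁ * (x : Heis p).2.1) * L.α =
        (x : Heis p).1 * L.D := by unfold D; linear_combination (-L.w₁) * hx
    calc L.tau x * L.α
        = ((L.w₂ * (x : Heis p).1 - L.w₁ * (x : Heis p).2.1) * L.α) * L.D⁻¹ := by
          unfold tau; ring
      _ = ((x : Heis p).1 * L.D) * L.D⁻¹ := by rw [h]
      _ = (x : Heis p).1 := by rw [mul_assoc, mul_inv_cancel₀ hD, mul_one]
  · have h : (L.w₂ * (x : Heis p).1 - L.w₁ * (x : Heis p).2.1) * L.β =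
        (x : Heis p).2.1 * L.D := by unfold D; linear_combination (-L.w₂) * hx
    calc L.tau x * L.β
        = ((L.w₂ * (x : Heis p).1 - L.w₁ * (x : Heis p).2.1) * L.β) * L.D⁻¹ := by
          unfold tau; ring
      _ = ((x : Heis p).2.1 * L.D) * L.D⁻¹ := by rw [h]
      _ = (x : Heis p).2.1 := by rw [mul_assoc, mul_inv_cancel₀ hD, mul_one]

lemma x_decomp (x : X) : ∃ c, x = L.x₁ ^ (L.tau x).val * L.zHX c := by
  obtain ⟨c, hc⟩ := pow_coords (L.x₁ : Heis p) (L.tau x).val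
  refine ⟨(x : Heis p).2.2 - c, ?_⟩
  apply Subtype.ext
  show (x : Heis p) = ((L.x₁ ^ (L.tau x).val : X) : Heis p) * zH ((x : Heis p).2.2 - c)
  rw [SubmonoidClass.coe_pow, hc]
  obtain ⟨h1, h2⟩ := L.coords_eq_tau x
  refine Prod.ext ?_ (Prod.ext ?_ ?_)
  · show (x : Heis p).1 = (((L.tau x).val : ZMod p)) * (L.x₁ : Heis p).1 + 0
    rw [natCast_val', add_zero, ← h1]
    rfl
  · show (x : Heis p).2.1 = (((L.tau x).val : ZMod p)) * (L.x₁ : Heis p).2.1 + 0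
    rw [natCast_val', add_zero, ← h2]
    rfl
  · show (x : Heis p).2.2 =
      c + ((x : Heis p).2.2 - c) + (((L.tau x).val : ZMod p)) * (L.x₁ : Heis p).1 * 0
    ring

lemma x₁_pow_p : ∃ c, L.x₁ ^ p = L.zHX c := by
  obtain ⟨c, hc⟩ := pow_coords (L.x₁ : Heis p) p
  refine ⟨c, ?_⟩
  apply Subtype.ext
  show ((L.x₁ ^ p : X) : Heis p) = zH c
  rw [SubmonoidClass.coe_pow, hc, ZMod.natCast_self]
  refine Prod.ext ?_ (Prod.ext ?_ ?_)
  · show (0 : ZMod p) * (L.x₁ : Heis p).1 = 0; ring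
  · show (0 : ZMod p) * (L.x₁ : Heis p).2.1 = 0; ring
  · rfl

section TwoChars

variable (ψX ψY : X →* ℂˣ)
  (hagree' : ∀ c : ZMod p, ψX (L.zHX c) = ψY (L.zHX c))

include hagree'

lemma mu_pow (x : X) :
    ψY x = ψX x * (ψY L.x₁ * (ψX L.x₁)⁻¹) ^ (L.tau x).val := by
  obtain ⟨c, hc⟩ := L.x_decomp x
  set n := (L.tau x).val
  have key : ψY x * (ψX x)⁻¹ = (ψY L.x₁ * (ψX L.x₁)⁻¹) ^ n := by
    rw [hc, map_mul, map_mul, map_pow, map_pow, mul_inv, ← hagree' c,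
      mul_pow, inv_pow, mul_mul_mul_comm, mul_inv_cancel, mul_one]
  calc ψY x = ψY x * (ψX x)⁻¹ * ψX x := by rw [inv_mul_cancel_right]
    _ = ψX x * (ψY L.x₁ * (ψX L.x₁)⁻¹) ^ n := by rw [key]; exact mul_comm _ _

lemma mu_pow_p : (ψY L.x₁ * (ψX L.x₁)⁻¹) ^ p = 1 := by
  obtain ⟨c, hc⟩ := L.x₁_pow_p
  rw [mul_pow, inv_pow, ← map_pow, ← map_pow, hc, hagree' c, mul_inv_cancel]

end TwoChars

lemma exists_log (ψ : X →* ℂˣ) (hnt : ∃ c, L.om ψ c ≠ 1) (μ : ℂˣ) (hμ : μ ^ p = 1) :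
    ∃ m : ZMod p, L.om ψ m = μ := by
  set ζ := L.om ψ 1 with hζdef
  have hord : orderOf ζ = p := by
    refine orderOf_eq_prime ?_ (L.om_ne_one ψ hnt)
    rw [hζdef, ← L.om_natCast, ZMod.natCast_self, L.om_zero]
  have hprim : IsPrimitiveRoot ζ p := by
    have := IsPrimitiveRoot.orderOf ζ
    rwa [hord] at this
  have hprimC : IsPrimitiveRoot ((ζ : ℂˣ) : ℂ) p := IsPrimitiveRoot.coe_units_iff.mpr hprim
  have hμC : ((μ : ℂˣ) : ℂ) ^ p = 1 := by
    rw [← Units.val_pow_eq_pow_val, hμ, Units.val_one]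
  obtain ⟨i, _, hi⟩ := hprimC.eq_pow_of_pow_eq_one hμC
  refine ⟨(i : ZMod p), ?_⟩
  rw [L.om_natCast]
  apply Units.ext
  rw [← hi, Units.val_pow_eq_pow_val]

lemma exists_conj_char (ψX ψY : X →* ℂˣ)
    (hagree' : ∀ c : ZMod p, ψX (L.zHX c) = ψY (L.zHX c))
    (hnt : ∃ c, L.om ψX c ≠ 1) :
    ∃ s : Heis p, ∀ x : X, ψX ⟨s * ↑x * s⁻¹, L.conj_mem s x.2⟩ = ψY x := by
  obtain ⟨m, hm⟩ := L.exists_log ψX hnt (ψY L.x₁ * (ψX L.x₁)⁻¹)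
    (L.mu_pow_p ψX ψY hagree')
  have hs : ∃ s : Heis p, L.β * s.1 - L.α * s.2.1 = m := by
    rcases not_and_or.mp L.ne_both_zero with hα0 | hβ0
    · exact ⟨(0, -(m * L.α⁻¹), 0), by
        show L.β * 0 - L.α * -(m * L.α⁻¹) = m
        field_simp
        ring⟩
    · exact ⟨(m * L.β⁻¹, 0, 0), by
        show L.β * (m * L.β⁻¹) - L.α * 0 = m
        field_simp
        ring⟩
  obtain ⟨s, he⟩ := hs
  refine ⟨s, fun x => ?_⟩
  have hXel : (⟨s * ↑x * s⁻¹, L.conj_mem s x.2⟩ : X) = x * L.zHX (L.tau x * m) := by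
    apply Subtype.ext
    show s * ↑x * s⁻¹ = (x : Heis p) * zH (L.tau x * m)
    rw [conj_def]
    obtain ⟨h1, h2⟩ := L.coords_eq_tau x
    refine Prod.ext ?_ (Prod.ext ?_ ?_)
    · show (x : Heis p).1 = (x : Heis p).1 + 0; ring
    · show (x : Heis p).2.1 = (x : Heis p).2.1 + 0; ring
    · show (x : Heis p).2.2 + s.1 * (x : Heis p).2.1 - (x : Heis p).1 * s.2.1 =
        (x : Heis p).2.2 + L.tau x * m + (x : Heis p).1 * 0
      rw [← h1, ← h2, ← he]
      ring
  rw [hXel, map_mul, L.om_zhx]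
  have : L.om ψX (L.tau x * m) = (ψY L.x₁ * (ψX L.x₁)⁻¹) ^ (L.tau x).val := by
    rw [← natCast_val' (L.tau x), L.om_natmul, hm, natCast_val']
  rw [this, ← L.mu_pow ψX ψY hagree' x]

end LineData

end HeisAux

namespace HeisAux

section ConjEquiv

variable {p : ℕ} [Fact p.Prime] {X : Subgroup (Heis p)} (L : LineData p X)
  (ψX ψY : X →* ℂˣ)

include L in
lemma conj_mem'' (s : Heis p) {x : Heis p} (hx : x ∈ X) : s⁻¹ * x * s ∈ X := by
  have h := L.conj_mem s⁻¹ hx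
  rwa [inv_inv] at h

/-- The conjugation intertwiner for two characters of the same subgroup. -/
def conjEquiv (s : Heis p)
    (hs : ∀ x : X, ψX ⟨s * ↑x * s⁻¹, L.conj_mem s x.2⟩ = ψY x) :
    IndCar X (charRep ψX) ≃ₗ[ℂ] IndCar X (charRep ψY) where
  toFun f := ⟨fun g => (f : Heis p → ℂ) (s * g), by
    intro h g
    rw [charRep_apply]
    show (f : Heis p → ℂ) (s * (↑h * g)) = (ψY h : ℂ) * (f : Heis p → ℂ) (s * g)
    rw [show s * (↑h * g) = (s * ↑h * s⁻¹) * (s * g) by group]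
    have h2 := f.2 ⟨s * ↑h * s⁻¹, L.conj_mem s h.2⟩ (s * g)
    rw [charRep_apply] at h2
    have h2' : (f : Heis p → ℂ) ((s * ↑h * s⁻¹) * (s * g)) =
        (ψX ⟨s * ↑h * s⁻¹, L.conj_mem s h.2⟩ : ℂ) * (f : Heis p → ℂ) (s * g) := h2
    rw [h2', hs h]⟩
  map_add' f f' := rfl
  map_smul' c f := rfl
  invFun f := ⟨fun g => (f : Heis p → ℂ) (s⁻¹ * g), by
    intro h g
    rw [charRep_apply]
    show (f : Heis p → ℂ) (s⁻¹ * (↑h * g)) = (ψX h : ℂ) * (f : Heis p → ℂ) (s⁻¹ * g)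
    rw [show s⁻¹ * (↑h * g) = (s⁻¹ * ↑h * s) * (s⁻¹ * g) by group]
    have h2 := f.2 ⟨s⁻¹ * ↑h * s, conj_mem'' L s h.2⟩ (s⁻¹ * g)
    rw [charRep_apply] at h2
    have h2' : (f : Heis p → ℂ) ((s⁻¹ * ↑h * s) * (s⁻¹ * g)) =
        (ψY ⟨s⁻¹ * ↑h * s, conj_mem'' L s h.2⟩ : ℂ) * (f : Heis p → ℂ) (s⁻¹ * g) := h2
    have h3 := hs ⟨s⁻¹ * ↑h * s, conj_mem'' L s h.2⟩
    have h4 : (⟨s * (s⁻¹ * ↑h * s) * s⁻¹,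
        L.conj_mem s (conj_mem'' L s h.2)⟩ : X) = h := by
      apply Subtype.ext
      show s * (s⁻¹ * ↑h * s) * s⁻¹ = ↑h
      group
    rw [h4] at h3
    rw [h2', ← h3]⟩
  left_inv f := by
    apply Subtype.ext
    funext g
    show (f : Heis p → ℂ) (s * (s⁻¹ * g)) = (f : Heis p → ℂ) g
    rw [mul_inv_cancel_left]
  right_inv f := by
    apply Subtype.ext
    funext g
    show (f : Heis p → ℂ) (s⁻¹ * (s * g)) = (f : Heis p → ℂ) g
    rw [inv_mul_cancel_left]

lemma conjEquiv_equivariant (s : Heis p)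
    (hs : ∀ x : X, ψX ⟨s * ↑x * s⁻¹, L.conj_mem s x.2⟩ = ψY x)
    (m : Heis p) (v : IndCar X (charRep ψX)) :
    conjEquiv L ψX ψY s hs (IndRep X (charRep ψX) m v) =
      IndRep X (charRep ψY) m (conjEquiv L ψX ψY s hs v) := by
  apply Subtype.ext
  funext g
  show (v : Heis p → ℂ) (s * g * m) = (v : Heis p → ℂ) (s * (g * m))
  rw [mul_assoc]

end ConjEquiv

section Twine

variable {p : ℕ} [Fact p.Prime] {X Y : Subgroup (Heis p)}
  (ψX : X →* ℂˣ) (ψY : Y →* ℂˣ)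

/-- The averaging intertwiner from `Ind_X ψX` to `Ind_Y ψY`. -/
def twine : IndCar X (charRep ψX) →ₗ[ℂ] IndCar Y (charRep ψY) where
  toFun f := ⟨fun g => ∑ y : Y, ((ψY y : ℂ))⁻¹ * (f : Heis p → ℂ) (↑y * g), by
    intro h g
    rw [charRep_apply]
    show ∑ y : Y, ((ψY y : ℂ))⁻¹ * (f : Heis p → ℂ) (↑y * (↑h * g)) =
      (ψY h : ℂ) * ∑ y : Y, ((ψY y : ℂ))⁻¹ * (f : Heis p → ℂ) (↑y * g)
    rw [Finset.mul_sum]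
    refine Fintype.sum_equiv (Equiv.mulRight h) _ _ (fun y => ?_)
    simp only [Equiv.coe_mulRight]
    have hco : ((y * h : Y) : Heis p) = ↑y * ↑h := rfl
    rw [map_mul, Units.val_mul, mul_inv, hco, mul_assoc]
    have hne : (ψY h : ℂ) ≠ 0 := Units.ne_zero _
    field_simp
    rw [mul_assoc (↑y : Heis p) (↑h : Heis p) g]⟩
  map_add' f f' := by
    apply Subtype.ext
    funext g
    show ∑ y : Y, ((ψY y : ℂ))⁻¹ *
        ((f : Heis p → ℂ) (↑y * g) + (f' : Heis p → ℂ) (↑y * g)) =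
      (∑ y : Y, ((ψY y : ℂ))⁻¹ * (f : Heis p → ℂ) (↑y * g)) +
        ∑ y : Y, ((ψY y : ℂ))⁻¹ * (f' : Heis p → ℂ) (↑y * g)
    rw [← Finset.sum_add_distrib]
    exact Finset.sum_congr rfl fun y _ => by ring
  map_smul' c f := by
    apply Subtype.ext
    funext g
    show ∑ y : Y, ((ψY y : ℂ))⁻¹ * (c * (f : Heis p → ℂ) (↑y * g)) =
      c * ∑ y : Y, ((ψY y : ℂ))⁻¹ * (f : Heis p → ℂ) (↑y * g)
    rw [Finset.mul_sum]
    exact Finset.sum_congr rfl fun y _ => by ring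

lemma twine_equivariant (m : Heis p) (f : IndCar X (charRep ψX)) :
    twine ψX ψY (IndRep X (charRep ψX) m f) =
      IndRep Y (charRep ψY) m (twine ψX ψY f) := by
  apply Subtype.ext
  funext g
  show ∑ y : Y, ((ψY y : ℂ))⁻¹ * (f : Heis p → ℂ) (↑y * g * m) =
    ∑ y : Y, ((ψY y : ℂ))⁻¹ * (f : Heis p → ℂ) (↑y * (g * m))
  exact Finset.sum_congr rfl fun y _ => by rw [mul_assoc]

lemma line_step {A B A' B' a b : ZMod p} (hAB : ¬(A = 0 ∧ B = 0))
    (h0 : A * B' - B * A' = 0) (hg : A * b = B * a) : A' * b = B' * a := by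
  rcases not_and_or.mp hAB with hA | hB
  · refine mul_left_cancel₀ hA ?_
    linear_combination A' * hg - a * h0
  · refine mul_left_cancel₀ hB ?_
    linear_combination B' * hg - b * h0

lemma eq_of_det_zero (L : LineData p X) (L' : LineData p Y)
    (h0 : L.α * L'.β - L.β * L'.α = 0) : X = Y := by
  ext g
  rw [L.hmem, L'.hmem]
  constructor
  · exact fun hg => line_step L.ne_both_zero h0 hg
  · exact fun hg => line_step L'.ne_both_zero (by linear_combination -h0) hg

lemma inter_central (L : LineData p X) (L' : LineData p Y)
    (hdet : L.α * L'.β - L.β * L'.α ≠ 0) {g : Heis p}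
    (hgX : g ∈ X) (hgY : g ∈ Y) : g.1 = 0 ∧ g.2.1 = 0 := by
  have h1 := (L.hmem g).mp hgX
  have h2 := (L'.hmem g).mp hgY
  constructor
  · have ha : (L.α * L'.β - L.β * L'.α) * g.1 = 0 := by
      linear_combination L'.α * h1 - L.α * h2
    rcases mul_eq_zero.mp ha with h | h
    · exact absurd h hdet
    · exact h
  · have hb : (L.α * L'.β - L.β * L'.α) * g.2.1 = 0 := by
      linear_combination L'.β * h1 - L.β * h2
    rcases mul_eq_zero.mp hb with h | h
    · exact absurd h hdet
    · exact h

open scoped Classical in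
lemma twine_bf_ne_zero (L : LineData p X) (L' : LineData p Y)
    (hdet : L.α * L'.β - L.β * L'.α ≠ 0)
    (hagree : ∀ z : Heis p, z ∈ Subgroup.center (Heis p) →
      ∀ (hzX : z ∈ X) (hzY : z ∈ Y), ψX ⟨z, hzX⟩ = ψY ⟨z, hzY⟩) :
    twine ψX ψY (L.bf ψX 0) ≠ 0 := by
  intro hzero
  have hval := congrFun (congrArg Subtype.val hzero) 1
  have hval1 : ∑ y : Y, ((ψY y : ℂ))⁻¹ * (L.bfFun ψX 0) (↑y * 1) = 0 := hval
  have hterm : ∀ y : Y, ((ψY y : ℂ))⁻¹ * (L.bfFun ψX 0) (↑y * 1) =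
      if (↑y : Heis p) ∈ X then 1 else 0 := by
    intro y
    rw [mul_one]
    by_cases hyX : (↑y : Heis p) ∈ X
    · rw [if_pos hyX]
      have hT : L.T ↑y = 0 := L.T_eq_zero_of_mem hyX
      have hb : L.bfFun ψX 0 ↑y = (ψX ⟨↑y, hyX⟩ : ℂ) := by
        unfold LineData.bfFun
        rw [if_pos hT, L.xgX_of_mem hyX]
      rw [hb]
      have hcen : (↑y : Heis p) ∈ Subgroup.center (Heis p) := by
        obtain ⟨hc1, hc2⟩ := inter_central L L' hdet hyX y.2
        have : (↑y : Heis p) = zH (↑y : Heis p).2.2 :=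
          Prod.ext hc1 (Prod.ext hc2 rfl)
        rw [this]
        exact zH_mem_center _
      have hag := hagree ↑y hcen hyX y.2
      have hYy : (⟨(↑y : Heis p), y.2⟩ : Y) = y := rfl
      rw [hag, hYy]
      rw [inv_mul_cancel₀ (Units.ne_zero _)]
    · rw [if_neg hyX]
      have hT : L.T ↑y ≠ 0 := fun h => hyX ((L.mem_iff_T _).mpr h)
      have hb : L.bfFun ψX 0 ↑y = 0 := by
        unfold LineData.bfFun
        rw [if_neg hT]
      rw [hb, mul_zero]
  rw [Finset.sum_congr rfl (fun y _ => hterm y), Finset.sum_boole] at hval1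
  have hmem1 : (1 : Y) ∈ Finset.univ.filter (fun y : Y => (↑y : Heis p) ∈ X) :=
    Finset.mem_filter.mpr ⟨Finset.mem_univ _, by
      show ((1 : Y) : Heis p) ∈ X
      rw [OneMemClass.coe_one]
      exact one_mem X⟩
  have hcard := Finset.card_ne_zero_of_mem hmem1
  exact hcard (by exact_mod_cast hval1)

lemma repIso_of_twine_ne_zero
    (hIrrX : IsIrred (IndRep X (charRep ψX))) (hIrrY : IsIrred (IndRep Y (charRep ψY)))
    (f₀ : IndCar X (charRep ψX)) (hf₀ : twine ψX ψY f₀ ≠ 0) :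
    RepIso (IndRep X (charRep ψX)) (IndRep Y (charRep ψY)) := by
  have hinvK : ∀ (m : Heis p) (v : IndCar X (charRep ψX)),
      v ∈ LinearMap.ker (twine ψX ψY) →
        IndRep X (charRep ψX) m v ∈ LinearMap.ker (twine ψX ψY) := by
    intro m v hv
    rw [LinearMap.mem_ker] at hv ⊢
    rw [twine_equivariant, hv, map_zero]
  have hker : LinearMap.ker (twine ψX ψY) = ⊥ := by
    rcases hIrrX.2 _ hinvK with h | h
    · exact h
    · exfalso
      apply hf₀
      have : f₀ ∈ LinearMap.ker (twine ψX ψY) := by rw [h]; trivial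
      exact LinearMap.mem_ker.mp this
  have hinvR : ∀ (m : Heis p) (w : IndCar Y (charRep ψY)),
      w ∈ LinearMap.range (twine ψX ψY) →
        IndRep Y (charRep ψY) m w ∈ LinearMap.range (twine ψX ψY) := by
    intro m w hw
    obtain ⟨u, rfl⟩ := hw
    exact ⟨IndRep X (charRep ψX) m u, twine_equivariant ψX ψY m u⟩
  have hrange : LinearMap.range (twine ψX ψY) = ⊤ := by
    rcases hIrrY.2 _ hinvR with h | h
    · exfalso
      apply hf₀
      have : twine ψX ψY f₀ ∈ LinearMap.range (twine ψX ψY) :=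
        LinearMap.mem_range_self _ f₀
      rw [h] at this
      exact this
    · exact h
  have hbij : Function.Bijective (twine ψX ψY) :=
    ⟨LinearMap.ker_eq_bot.mp hker, LinearMap.range_eq_top.mp hrange⟩
  refine ⟨LinearEquiv.ofBijective _ hbij, fun m v => ?_⟩
  show twine ψX ψY (IndRep X (charRep ψX) m v) = _
  rw [twine_equivariant]
  rfl

end Twine

end HeisAux

/-- let `H` be the Heisenberg group over `𝔽_p` with center `Z` (of order
`p`), let `X`, `Y` be maximal abelian subgroups and `ψ_X`, `ψ_Y` one-dimensional
characters whose restrictions to `Z` agree and are nontrivial.  Then `Ind_X^H ψ_X` and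
`Ind_Y^H ψ_Y` are isomorphic irreducible representations of `H` of dimension `p`. -/
theorem heisenberg_induced_characters [Fact p.Prime]
    (X Y : Subgroup (Heis p)) (hX : IsMaximalAbelian X) (hY : IsMaximalAbelian Y)
    (ψX : X →* ℂˣ) (ψY : Y →* ℂˣ)
    (hagree : ∀ z : Heis p, z ∈ Subgroup.center (Heis p) →
      ∀ (hzX : z ∈ X) (hzY : z ∈ Y), ψX ⟨z, hzX⟩ = ψY ⟨z, hzY⟩)
    (hnontriv : ∃ z : Heis p, z ∈ Subgroup.center (Heis p) ∧
      ∃ hzX : z ∈ X, ψX ⟨z, hzX⟩ ≠ 1) :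
    IsIrred (IndRep X (charRep ψX)) ∧ IsIrred (IndRep Y (charRep ψY)) ∧
    RepIso (IndRep X (charRep ψX)) (IndRep Y (charRep ψY)) ∧
    Module.finrank ℂ (IndCar X (charRep ψX)) = p := by
  classical
  obtain ⟨L⟩ := HeisAux.lineData_of_max hX
  obtain ⟨L'⟩ := HeisAux.lineData_of_max hY
  obtain ⟨z, hzc, hzX, hzne⟩ := hnontriv
  have hzeq : z = HeisAux.zH z.2.2 := HeisAux.eq_zH_of_mem_center hzc
  have hntX : ∃ c, L.om ψX c ≠ 1 := by
    refine ⟨z.2.2, fun h => hzne ?_⟩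
    have hmk : (⟨z, hzX⟩ : X) = L.zHX z.2.2 := Subtype.ext hzeq
    rw [hmk]
    exact h
  have hntY : ∃ c, L'.om ψY c ≠ 1 := by
    refine ⟨z.2.2, fun h => hzne ?_⟩
    have hzY : z ∈ Y := by rw [hzeq]; exact (L'.zHX z.2.2).2
    have h1 := hagree z hzc hzX hzY
    have h2 : (⟨z, hzY⟩ : Y) = L'.zHX z.2.2 := Subtype.ext hzeq
    rw [h1, h2]
    exact h
  have hIrrX := L.isIrred_ind ψX hntX
  have hIrrY := L'.isIrred_ind ψY hntY
  refine ⟨hIrrX, hIrrY, ?_, HeisAux.LineData.finrank_ind L ψX⟩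
  by_cases hXY : X = Y
  · subst hXY
    have hagree' : ∀ c : ZMod p, ψX (L.zHX c) = ψY (L.zHX c) := by
      intro c
      exact hagree (HeisAux.zH c) (HeisAux.zH_mem_center c) (L.zHX c).2 (L.zHX c).2
    obtain ⟨s, hs⟩ := L.exists_conj_char ψX ψY hagree' hntX
    exact ⟨HeisAux.conjEquiv L ψX ψY s hs, HeisAux.conjEquiv_equivariant L ψX ψY s hs⟩
  · have hdet : L.α * L'.β - L.β * L'.α ≠ 0 :=
      fun h0 => hXY (HeisAux.eq_of_det_zero L L' h0)
    exact HeisAux.repIso_of_twine_ne_zero ψX ψY hIrrX hIrrY (L.bf ψX 0)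
      (HeisAux.twine_bf_ne_zero ψX ψY L L' hdet hagree)
end
end
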